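/- Let T_{α,β} be the balanced spider with α ≥ 3 legs each of order β ≥ 1. Then th₊(T_{α,β}) = 1 + α·ŝ + t, where ŝ = ⌊√((2β + α + 1)/(4α))⌋ and t = ⌈(β − ŝ)/(2ŝ + 1)⌉ = ⌈(β + 1/2)/(2ŝ + 1) − 1/2⌉. -/

import Mathlib

open SimpleGraph

/-- `v` PSD-forces `w` given blue set `B`: `v` is blue, adjacent to the white vertex `w`,
and `w` is the only white neighbor of `v` in the component of `G - B` containing `w`. -/
def psdForces {V : Type*} (G : SimpleGraph V) (B : Set V) (v w : V) : Prop :=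
  v ∈ B ∧ G.Adj v w ∧ ∃ hw : w ∉ B,
    ∀ (u : V) (hu : u ∉ B), G.Adj v u →
      (G.induce {x | x ∉ B}).Reachable ⟨u, hu⟩ ⟨w, hw⟩ → u = w

/-- One time-step of PSD forcing: all forceable white vertices become blue simultaneously. -/
def psdStep {V : Type*} (G : SimpleGraph V) (B : Set V) : Set V :=
  B ∪ {w | ∃ v, psdForces G B v w}

/-- `B` is a PSD-forcing set of `G` if iterating the PSD color change rule colors all of `V`. -/
def IsPSDForcing {V : Type*} (G : SimpleGraph V) (B : Set V) : Prop :=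
  ∃ t, (psdStep G)^[t] B = Set.univ

/-- The PSD-propagation time of `B` in `G`. -/
noncomputable def psdPt {V : Type*} (G : SimpleGraph V) (B : Set V) : ℕ :=
  sInf {t | (psdStep G)^[t] B = Set.univ}

/-- The PSD-throttling number of `G`. -/
noncomputable def psdTh {V : Type*} (G : SimpleGraph V) : ℕ :=
  sInf {k | ∃ B : Finset V, IsPSDForcing G ↑B ∧ k = B.card + psdPt G ↑B}

/-- The weighted PSD-throttling number of `(G, w)`. -/
noncomputable def psdThW {V : Type*} (G : SimpleGraph V) (w : V → ℕ) : ℕ :=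
  sInf {k | ∃ B : Finset V, IsPSDForcing G ↑B ∧ k = (∑ x ∈ B, w x) + psdPt G ↑B}

/-- The spider `S(l₀, …, l_{k-1})`: a center vertex `none` adjacent to the first vertex
of each of `k` disjoint paths, the `i`-th of order `l i`. -/
def spider (k : ℕ) (l : Fin k → ℕ) : SimpleGraph (Option ((i : Fin k) × Fin (l i))) :=
  SimpleGraph.fromRel (fun x y =>
    (∃ (i : Fin k) (j : Fin (l i)), (j : ℕ) = 0 ∧ x = none ∧ y = some ⟨i, j⟩) ∨
    (∃ (i : Fin k) (j j' : Fin (l i)), (j' : ℕ) = (j : ℕ) + 1 ∧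
      x = some ⟨i, j⟩ ∧ y = some ⟨i, j'⟩))

/-- The balanced spider `T_{α,β}` with `α` legs each of order `β`. -/
abbrev balancedSpider (α β : ℕ) : SimpleGraph (Option ((_ : Fin α) × Fin β)) :=
  spider α (fun _ => β)


namespace SpiderAux

abbrev SV (α β : ℕ) := Option ((_ : Fin α) × Fin β)

variable {α β : ℕ}

def dep : SV α β → ℕ | none => 0 | some p => p.2.val + 1
def legO : SV α β → Option (Fin α) | none => none | some p => some p.1

@[simp] lemma dep_none : dep (none : SV α β) = 0 := rfl
@[simp] lemma dep_some (p : (_ : Fin α) × Fin β) : dep (some p) = p.2.val + 1 := rfl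
@[simp] lemma legO_none : legO (none : SV α β) = none := rfl
@[simp] lemma legO_some (p : (_ : Fin α) × Fin β) : legO (some p) = some p.1 := rfl

lemma eq_of_dep_leg {x y : SV α β} (h1 : legO x = legO y) (h2 : dep x = dep y) : x = y := by
  match x, y with
  | none, none => rfl
  | none, some p => simp at h1
  | some p, none => simp at h1
  | some p, some q =>
    simp at h1 h2
    obtain ⟨i, j⟩ := p; obtain ⟨i', j'⟩ := q
    simp_all [Fin.val_eq_val]

lemma dep_eq_zero_iff {x : SV α β} : dep x = 0 ↔ x = none := by
  match x with
  | none => simp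
  | some p => simp [dep]

def D (x y : SV α β) : ℕ :=
  if legO x = legO y then Nat.dist (dep x) (dep y) else dep x + dep y

@[simp] lemma D_self (x : SV α β) : D x x = 0 := by simp [D, Nat.dist_self]

lemma D_eq_zero_iff {x y : SV α β} : D x y = 0 ↔ x = y := by
  constructor
  · intro h
    unfold D at h
    split at h
    · exact eq_of_dep_leg ‹_› (Nat.eq_of_dist_eq_zero h)
    · rename_i hne
      have hx : dep x = 0 := by omega
      have hy : dep y = 0 := by omega
      rw [dep_eq_zero_iff] at hx hy
      subst hx; subst hy; exact absurd rfl hne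
  · rintro rfl; simp

lemma adj_none_some (i : Fin α) (j : Fin β) (hj : j.val = 0) :
    (balancedSpider α β).Adj none (some ⟨i, j⟩) := by
  rw [balancedSpider, spider, fromRel_adj]
  exact ⟨by simp, Or.inl (Or.inl ⟨i, j, hj, rfl, rfl⟩)⟩

lemma adj_consec (i : Fin α) (j j' : Fin β) (h : j'.val = j.val + 1) :
    (balancedSpider α β).Adj (some ⟨i, j⟩) (some ⟨i, j'⟩) := by
  rw [balancedSpider, spider, fromRel_adj]
  refine ⟨?_, Or.inl (Or.inr ⟨i, j, j', h, rfl, rfl⟩)⟩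
  simp only [ne_eq, Option.some_inj]
  intro he
  have : j = j' := by
    have := congrArg (fun p => p.2.1) he
    simpa [Fin.val_eq_val] using congrArg Sigma.snd he |> fun _ => by
      cases he; rfl
  omega

lemma adj_cases {x y : SV α β} (h : (balancedSpider α β).Adj x y) :
    (∃ (i : Fin α) (j : Fin β), j.val = 0 ∧
      ((x = none ∧ y = some ⟨i, j⟩) ∨ (y = none ∧ x = some ⟨i, j⟩))) ∨
    (∃ (i : Fin α) (j j' : Fin β), j'.val = j.val + 1 ∧
      ((x = some ⟨i, j⟩ ∧ y = some ⟨i, j'⟩) ∨ (y = some ⟨i, j⟩ ∧ x = some ⟨i, j'⟩))) := by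
  rw [balancedSpider, spider, fromRel_adj] at h
  obtain ⟨-, h | h⟩ := h
  · rcases h with ⟨i, j, hj, h1, h2⟩ | ⟨i, j, j', hj, h1, h2⟩
    · exact Or.inl ⟨i, j, hj, Or.inl ⟨h1, h2⟩⟩
    · exact Or.inr ⟨i, j, j', hj, Or.inl ⟨h1, h2⟩⟩
  · rcases h with ⟨i, j, hj, h1, h2⟩ | ⟨i, j, j', hj, h1, h2⟩
    · exact Or.inl ⟨i, j, hj, Or.inr ⟨h1, h2⟩⟩
    · exact Or.inr ⟨i, j, j', hj, Or.inr ⟨h1, h2⟩⟩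

end SpiderAux

namespace SpiderAux
variable {α β : ℕ}

lemma D_lipschitz {b x y : SV α β} (h : (balancedSpider α β).Adj x y) :
    D b y ≤ D b x + 1 := by
  rcases adj_cases h with ⟨i, j, hj, ⟨rfl, rfl⟩ | ⟨rfl, rfl⟩⟩ |
    ⟨i, j, j', hj, ⟨rfl, rfl⟩ | ⟨rfl, rfl⟩⟩ <;>
  · match b with
    | none => simp [D, Nat.dist] <;> omega
    | some ⟨ib, jb⟩ =>
      by_cases hbi : ib = i
      · subst hbi; simp [D, Nat.dist]; omega
      · simp [D, Nat.dist, legO, Option.some_inj, hbi]; omega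

lemma D_descend {b x : SV α β} {t : ℕ} (h : D b x = t + 1) :
    ∃ y, (balancedSpider α β).Adj y x ∧ D b y ≤ t := by
  match x with
  | none =>
    match b with
    | none => simp at h
    | some ⟨i, j⟩ =>
      have hD : j.val + 1 = t + 1 := by simpa [D] using h
      have hβ : 0 < β := j.pos
      refine ⟨some ⟨i, ⟨0, hβ⟩⟩, (adj_none_some i ⟨0, hβ⟩ rfl).symm, ?_⟩
      simp [D, Nat.dist]; omega
  | some ⟨i, j⟩ =>
    match b with
    | none =>
      have hD : j.val + 1 = t + 1 := by simpa [D] using h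
      rcases Nat.eq_zero_or_pos j.val with hj0 | hj0
      · exact ⟨none, adj_none_some i j hj0, by simp <;> omega⟩
      · refine ⟨some ⟨i, ⟨j.val - 1, by omega⟩⟩, adj_consec i _ j (by simp; omega), ?_⟩
        simp [D, Nat.dist]; omega
    | some ⟨ib, jb⟩ =>
      by_cases hbi : ib = i
      · subst hbi
        have hD : Nat.dist (jb.val + 1) (j.val + 1) = t + 1 := by simpa [D] using h
        rcases Nat.lt_or_ge jb.val j.val with hlt | hge
        · refine ⟨some ⟨ib, ⟨j.val - 1, by omega⟩⟩, adj_consec ib _ j (by simp; omega), ?_⟩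
          simp [D, Nat.dist] at *; omega
        · have hgt : j.val < jb.val := by
            rcases Nat.lt_or_ge j.val jb.val with h' | h'
            · exact h'
            · have : jb.val = j.val := by omega
              simp [this, Nat.dist_self] at hD
          refine ⟨some ⟨ib, ⟨j.val + 1, by omega⟩⟩, (adj_consec ib j _ (by simp)).symm, ?_⟩
          simp [D, Nat.dist] at *; omega
      · have hD : (jb.val + 1) + (j.val + 1) = t + 1 := by
          simpa [D, legO, Option.some_inj, hbi] using h
        rcases Nat.eq_zero_or_pos j.val with hj0 | hj0
        · exact ⟨none, adj_none_some i j hj0, by simp [D]; omega⟩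
        · refine ⟨some ⟨i, ⟨j.val - 1, by omega⟩⟩, adj_consec i _ j (by simp; omega), ?_⟩
          simp [D, Nat.dist, legO, Option.some_inj, hbi]; omega

end SpiderAux

namespace SpiderAux
variable {α β : ℕ}

lemma reach_invariant {B : Set (SV α β)} {v : SV α β} (hv : v ∈ B) (P : SV α β → Prop)
    (hP : ∀ x y, (balancedSpider α β).Adj x y → x ≠ v → y ≠ v → (P x ↔ P y))
    {a b : {x : SV α β // x ∈ {x | x ∉ B}}}
    (h : ((balancedSpider α β).induce {x | x ∉ B}).Reachable a b) : P a.1 ↔ P b.1 := by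
  obtain ⟨p⟩ := h
  induction p with
  | nil => exact Iff.rfl
  | cons hadj q ih =>
    rename_i c d e
    have hcd : (balancedSpider α β).Adj c.1 d.1 := hadj
    have hcv : c.1 ≠ v := fun h => c.2 (h ▸ hv)
    have hdv : d.1 ≠ v := fun h => d.2 (h ▸ hv)
    exact (hP _ _ hcd hcv hdv).trans ih

lemma adj_center {z : SV α β} (h : (balancedSpider α β).Adj none z) :
    ∃ (i : Fin α) (j : Fin β), j.val = 0 ∧ z = some ⟨i, j⟩ := by
  rcases adj_cases h with ⟨i, j, hj, ⟨-, h2⟩ | ⟨-, h2⟩⟩ |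
    ⟨i, j, j', hj, ⟨h1, -⟩ | ⟨-, h2⟩⟩
  · exact ⟨i, j, hj, h2⟩
  · exact nomatch h2
  · exact nomatch h1
  · exact nomatch h2

lemma adj_some {i : Fin α} {j : Fin β} {z : SV α β}
    (h : (balancedSpider α β).Adj (some ⟨i, j⟩) z) :
    (z = none ∧ j.val = 0) ∨
    (∃ j' : Fin β, z = some ⟨i, j'⟩ ∧ (j'.val + 1 = j.val ∨ j.val + 1 = j'.val)) := by
  rcases adj_cases h with ⟨i', j0, hj0, ⟨h1, -⟩ | ⟨h1, h2⟩⟩ |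
    ⟨i', ja, jb, hab, ⟨h1, h2⟩ | ⟨h1, h2⟩⟩
  · exact nomatch h1
  · simp only [Option.some_inj, Sigma.mk.inj_iff, heq_eq_eq] at h2
    obtain ⟨rfl, rfl⟩ := h2
    exact Or.inl ⟨h1, hj0⟩
  · simp only [Option.some_inj, Sigma.mk.inj_iff, heq_eq_eq] at h1
    obtain ⟨rfl, rfl⟩ := h1
    exact Or.inr ⟨jb, h2, Or.inr hab.symm⟩
  · simp only [Option.some_inj, Sigma.mk.inj_iff, heq_eq_eq] at h2
    obtain ⟨rfl, rfl⟩ := h2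
    exact Or.inr ⟨ja, h1, Or.inl hab.symm⟩

lemma separation {B : Set (SV α β)} {v u w : SV α β} (hv : v ∈ B) (hu : u ∉ B) (hw : w ∉ B)
    (hau : (balancedSpider α β).Adj v u) (haw : (balancedSpider α β).Adj v w) (hne : u ≠ w) :
    ¬ ((balancedSpider α β).induce {x | x ∉ B}).Reachable ⟨u, hu⟩ ⟨w, hw⟩ := by
  intro hreach
  match v with
  | none =>
    obtain ⟨iu, ju, hju, rfl⟩ := adj_center hau
    obtain ⟨iw, jw, hjw, rfl⟩ := adj_center haw
    have key := reach_invariant hv (fun x => legO x = some iu) ?_ hreach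
    · simp only [legO_some, Option.some_inj] at key
      have hiw : iw = iu := by simpa using key
      subst hiw
      exact hne (by rw [show ju = jw from Fin.ext (by omega)])
    · intro x y hxy hx hy
      rcases adj_cases hxy with ⟨i, j, hj, ⟨h1, -⟩ | ⟨h1, -⟩⟩ |
        ⟨i, j, j', hj, ⟨h1, h2⟩ | ⟨h1, h2⟩⟩
      · exact absurd h1 hx
      · exact absurd h1 hy
      · subst h1; subst h2; simp
      · subst h1; subst h2; simp
  | some ⟨iv, jv⟩ =>
    have key := reach_invariant hv (fun x => legO x = some iv ∧ jv.val + 1 < dep x) ?_ hreach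
    · simp only at key
      rcases adj_some hau with ⟨rfl, hjv0⟩ | ⟨ju, rfl, hju⟩ <;>
        rcases adj_some haw with ⟨rfl, hjv0'⟩ | ⟨jw, rfl, hjw⟩
      · exact hne rfl
      · -- u = none, w = some ⟨iv, jw⟩ with jw = jv + 1 (since jv = 0)
        have hR : legO (some ⟨iv, jw⟩ : SV α β) = some iv ∧
            jv.val + 1 < dep (some ⟨iv, jw⟩ : SV α β) := ⟨by simp, by simp; omega⟩
        have := key.mpr hR
        simp at this
      · have hR : legO (some ⟨iv, ju⟩ : SV α β) = some iv ∧
            jv.val + 1 < dep (some ⟨iv, ju⟩ : SV α β) := ⟨by simp, by simp; omega⟩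
        have := key.mp hR
        simp at this
      · simp only [legO_some, dep_some, Option.some_inj] at key
        have hjj : ju.val = jw.val := by
          rcases hju with h1 | h1 <;> rcases hjw with h2 | h2
          · omega
          · exfalso
            have := key.mpr ⟨by trivial, by omega⟩
            omega
          · exfalso
            have := key.mp ⟨by trivial, by omega⟩
            omega
          · omega
        exact hne (by rw [show ju = jw from Fin.ext hjj])
    · intro x y hxy hx hy
      rcases adj_cases hxy with ⟨i, j, hj, ⟨h1, h2⟩ | ⟨h1, h2⟩⟩ |
        ⟨i, j, j', hj, ⟨h1, h2⟩ | ⟨h1, h2⟩⟩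
      all_goals subst h1; subst h2
      · simp only [legO_none, legO_some, dep_none, dep_some]
        constructor
        · rintro ⟨h, -⟩; exact absurd h (by simp)
        · rintro ⟨-, h⟩; omega
      · simp only [legO_none, legO_some, dep_none, dep_some]
        constructor
        · rintro ⟨-, h⟩; omega
        · rintro ⟨h, -⟩; exact absurd h (by simp)
      · by_cases hii : i = iv
        · subst hii
          have hjne : j.val ≠ jv.val := fun hjj => hx (by rw [show j = jv from Fin.ext hjj])
          have hjne' : j'.val ≠ jv.val := fun hjj => hy (by rw [show j' = jv from Fin.ext hjj])
          simp only [legO_some, dep_some, Option.some_inj]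
          constructor
          · rintro ⟨-, h⟩; exact ⟨by trivial, by omega⟩
          · rintro ⟨-, h⟩; exact ⟨by trivial, by omega⟩
        · simp only [legO_some, dep_some, Option.some_inj]
          exact ⟨fun h => absurd h.1 hii, fun h => absurd h.1 hii⟩
      · by_cases hii : i = iv
        · subst hii
          have hjne : j.val ≠ jv.val := fun hjj => hy (by rw [show j = jv from Fin.ext hjj])
          have hjne' : j'.val ≠ jv.val := fun hjj => hx (by rw [show j' = jv from Fin.ext hjj])
          simp only [legO_some, dep_some, Option.some_inj]
          constructor
          · rintro ⟨-, h⟩; exact ⟨by trivial, by omega⟩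
          · rintro ⟨-, h⟩; exact ⟨by trivial, by omega⟩
        · simp only [legO_some, dep_some, Option.some_inj]
          exact ⟨fun h => absurd h.1 hii, fun h => absurd h.1 hii⟩

end SpiderAux

namespace SpiderAux
variable {α β : ℕ}

lemma step_eq (B : Set (SV α β)) :
    psdStep (balancedSpider α β) B =
      B ∪ {w | w ∉ B ∧ ∃ v ∈ B, (balancedSpider α β).Adj v w} := by
  unfold psdStep
  ext w
  simp only [Set.mem_union, Set.mem_setOf_eq]
  constructor
  · rintro (h | ⟨v, hv, hadj, hw, -⟩)
    · exact Or.inl h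
    · exact Or.inr ⟨hw, v, hv, hadj⟩
  · rintro (h | ⟨hw, v, hv, hadj⟩)
    · exact Or.inl h
    · refine Or.inr ⟨v, hv, hadj, hw, fun u hu hadj' hr => ?_⟩
      by_contra hne
      exact separation hv hu hw hadj' hadj hne hr

lemma iterate_eq (B : Set (SV α β)) (t : ℕ) :
    (psdStep (balancedSpider α β))^[t] B = {x | ∃ b ∈ B, D b x ≤ t} := by
  induction t with
  | zero =>
    simp only [Function.iterate_zero, id_eq, Nat.le_zero]
    ext x
    simp only [Set.mem_setOf_eq]
    constructor
    · intro hx; exact ⟨x, hx, D_self x⟩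
    · rintro ⟨b, hb, hD⟩; rwa [← D_eq_zero_iff.mp hD]
  | succ t ih =>
    rw [Function.iterate_succ_apply', ih, step_eq]
    ext x
    simp only [Set.mem_union, Set.mem_setOf_eq]
    constructor
    · rintro (⟨b, hb, hD⟩ | ⟨-, v, ⟨b, hb, hD⟩, hadj⟩)
      · exact ⟨b, hb, hD.trans (Nat.le_succ t)⟩
      · exact ⟨b, hb, le_trans (D_lipschitz hadj) (by omega)⟩
    · rintro ⟨b, hb, hD⟩
      by_cases hx : ∃ b' ∈ B, D b' x ≤ t
      · exact Or.inl hx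
      · push_neg at hx
        refine Or.inr ⟨?_, ?_⟩
        · rintro ⟨b', hb', hD'⟩; exact absurd hD' (by have := hx b' hb'; omega)
        · have hDx : D b x = t + 1 := by have := hx b hb; omega
          obtain ⟨y, hyx, hDy⟩ := D_descend hDx
          exact ⟨y, ⟨b, hb, hDy⟩, hyx⟩

lemma dep_le (x : SV α β) : dep x ≤ β := by
  match x with
  | none => simp
  | some p => simp [dep]

lemma D_le (b x : SV α β) : D b x ≤ 2 * β := by
  have h1 := dep_le b; have h2 := dep_le x
  unfold D
  split
  · simp [Nat.dist]; omega
  · omega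

lemma forcing_iff (B : Set (SV α β)) :
    IsPSDForcing (balancedSpider α β) B ↔ B.Nonempty := by
  constructor
  · rintro ⟨t, ht⟩
    by_contra hemp
    rw [Set.not_nonempty_iff_eq_empty] at hemp
    subst hemp
    rw [iterate_eq] at ht
    have : (none : SV α β) ∈ {x : SV α β | ∃ b ∈ (∅ : Set (SV α β)), D b x ≤ t} := by
      rw [ht]; trivial
    simpa using this
  · rintro ⟨b, hb⟩
    refine ⟨2 * β, ?_⟩
    rw [iterate_eq]
    ext x
    simp only [Set.mem_setOf_eq, Set.mem_univ, iff_true]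
    exact ⟨b, hb, D_le b x⟩

end SpiderAux

namespace SpiderAux

def shat (α β : ℕ) : ℕ := Nat.sqrt ((2*β + α + 1) / (4*α))
def that (α β : ℕ) : ℕ := (β + shat α β) / (2 * shat α β + 1)

section Arith
variable {α β : ℕ} (hα : 3 ≤ α) (hβ : 1 ≤ β)

lemma F1 : 4*α*(shat α β)^2 ≤ 2*β + α + 1 := by
  have h := Nat.sqrt_le' ((2*β + α + 1) / (4*α))
  calc 4*α*(shat α β)^2 = (Nat.sqrt ((2*β + α + 1) / (4*α)))^2 * (4*α) := by
        rw [shat]; ring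
    _ ≤ ((2*β + α + 1) / (4*α)) * (4*α) := Nat.mul_le_mul_right _ h
    _ ≤ 2*β + α + 1 := Nat.div_mul_le_self _ _

include hα in
lemma F2 : 2*β + α + 1 < 4*α*(shat α β + 1)^2 := by
  have h4 : 0 < 4*α := by omega
  have h := Nat.lt_succ_sqrt' ((2*β + α + 1) / (4*α))
  have hmod := Nat.div_add_mod (2*β + α + 1) (4*α)
  have hlt := Nat.mod_lt (2*β + α + 1) h4
  have h1 : 2*β + α + 1 < 4*α * ((2*β + α + 1) / (4*α) + 1) := by
    rw [Nat.mul_add, Nat.mul_one]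
    omega
  have h2 : (2*β + α + 1) / (4*α) + 1 ≤ (shat α β + 1)^2 := by
    have := h
    rw [Nat.succ_eq_add_one] at this
    have : (2*β + α + 1) / (4*α) < (shat α β + 1)^2 := by rw [shat]; exact this
    omega
  calc 2*β + α + 1 < 4*α * ((2*β + α + 1) / (4*α) + 1) := h1
    _ ≤ 4*α*(shat α β + 1)^2 := Nat.mul_le_mul_left _ h2

lemma F3 : β ≤ (2 * shat α β + 1) * that α β + shat α β := by
  have h1 : 0 < 2 * shat α β + 1 := by omega
  have hmod := Nat.div_add_mod (β + shat α β) (2 * shat α β + 1)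
  have hlt := Nat.mod_lt (β + shat α β) h1
  rw [that]
  omega

lemma F4 : (2 * shat α β + 1) * that α β ≤ β + shat α β := by
  have hmod := Nat.div_add_mod (β + shat α β) (2 * shat α β + 1)
  rw [that]
  omega

include hα hβ in
lemma F5 : 2 * (shat α β)^2 ≤ β := by
  have h1 := F1 (α := α) (β := β)
  have h2 : 2*β + α + 1 ≤ 2*α*β := by nlinarith
  have h3 : (2*α) * (2 * (shat α β)^2) ≤ (2*α) * β := by nlinarith
  exact Nat.le_of_mul_le_mul_left h3 (by omega)

include hα hβ in
lemma F6 : shat α β ≤ that α β := by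
  have h5 := F5 hα hβ
  rw [that]
  rw [Nat.le_div_iff_mul_le (by omega)]
  nlinarith

include hα hβ in
lemma F7 : (2 * that α β + 1) * shat α β ≤ β + that α β := by
  have h4 := F4 (α := α) (β := β)
  have h6 := F6 hα hβ
  nlinarith

noncomputable def Cfun (β : ℕ) (s : ℕ) : ℤ := ⌈((β:ℝ) - s) / (2*s+1)⌉

lemma c1 : (that α β : ℤ) = Cfun β (shat α β) := by
  have h3 := F3 (α := α) (β := β)
  have h4 := F4 (α := α) (β := β)
  have hpos : (0:ℝ) < 2*(shat α β : ℝ)+1 := by positivity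
  rw [Cfun, eq_comm, Int.ceil_eq_iff]
  constructor
  · rw [lt_div_iff₀ hpos]
    push_cast
    have : ((2 * shat α β + 1) * that α β : ℝ) ≤ (β : ℝ) + shat α β := by
      exact_mod_cast Nat.cast_le.mpr h4
    push_cast at this
    nlinarith
  · rw [div_le_iff₀ hpos]
    have : ((β:ℝ)) ≤ (2 * shat α β + 1) * that α β + shat α β := by exact_mod_cast h3
    push_cast at this ⊢
    nlinarith

lemma c2 (s u : ℕ) (h : β ≤ (2*s+1)*u + s) : Cfun β s ≤ u := by
  have hpos : (0:ℝ) < 2*(s : ℝ)+1 := by positivity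
  rw [Cfun, Int.ceil_le]
  rw [div_le_iff₀ hpos]
  have : ((β:ℝ)) ≤ (2*s+1)*u + s := by exact_mod_cast h
  push_cast
  push_cast at this
  nlinarith

include hα in
lemma mono_up (s : ℕ) (hs : shat α β ≤ s) : Cfun β s ≤ Cfun β (s+1) + α := by
  have h2 := F2 (α := α) (β := β) hα
  have hpos1 : (0:ℝ) < 2*(s:ℝ)+1 := by positivity
  have hpos2 : (0:ℝ) < 2*(s:ℝ)+3 := by positivity
  have hkey : (2*(β:ℝ)+1) < α * ((2*s+1)*(2*s+3)) := by
    have hs' : (shat α β : ℝ) ≤ s := by exact_mod_cast hs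
    have hmain : (2*(β:ℝ) + α + 1) < 4*α*((shat α β : ℝ) + 1)^2 := by exact_mod_cast h2
    have hs0 : (0:ℝ) ≤ (shat α β : ℝ) := by positivity
    have hsq : ((shat α β : ℝ)+1)^2 ≤ ((s:ℝ)+1)^2 := by nlinarith
    have h5 : 4*(α:ℝ)*(((shat α β : ℝ))+1)^2 ≤ 4*(α:ℝ)*(((s:ℝ))+1)^2 := by
      nlinarith [mul_le_mul_of_nonneg_left hsq (by positivity : (0:ℝ) ≤ 4*(α:ℝ))]
    have hr : (α:ℝ) * ((2*(s:ℝ)+1)*(2*(s:ℝ)+3)) = 4*α*((s:ℝ)+1)^2 - α := by ring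
    have hα' : (3:ℝ) ≤ (α:ℝ) := by exact_mod_cast hα
    linarith
  have hxy : ((β:ℝ) - s) / (2*s+1) ≤ ((β:ℝ) - (s+1)) / (2*(s+1)+1) + α := by
    rw [div_add' _ _ _ (by positivity), div_le_div_iff₀ hpos1 (by positivity)]
    push_cast
    nlinarith
  calc Cfun β s ≤ ⌈((β:ℝ) - (s+1)) / (2*(s+1)+1) + α⌉ := Int.ceil_le_ceil hxy
    _ = Cfun β (s+1) + α := by
        rw [Cfun, ← Int.ceil_add_intCast]
        norm_num
    
include hα in
lemma mono_down (s : ℕ) (hs : s + 1 ≤ shat α β) : Cfun β (s+1) + α ≤ Cfun β s := by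
  have h1 := F1 (α := α) (β := β)
  have hpos1 : (0:ℝ) < 2*(s:ℝ)+1 := by positivity
  have hkey : (α:ℝ) * ((2*s+1)*(2*s+3)) ≤ 2*(β:ℝ)+1 := by
    have hss : (s:ℝ) + 1 ≤ (shat α β : ℝ) := by exact_mod_cast hs
    have h1' : 4*(α:ℝ)*((shat α β : ℝ))^2 ≤ 2*β + α + 1 := by exact_mod_cast h1
    have hs0 : (0:ℝ) ≤ (s : ℝ) := by positivity
    have hsq : ((s:ℝ)+1)^2 ≤ ((shat α β : ℝ))^2 := by nlinarith
    have h5 : 4*(α:ℝ)*(((s:ℝ))+1)^2 ≤ 4*(α:ℝ)*((shat α β : ℝ))^2 := by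
      nlinarith [mul_le_mul_of_nonneg_left hsq (by positivity : (0:ℝ) ≤ 4*(α:ℝ))]
    have hr : (α:ℝ) * ((2*(s:ℝ)+1)*(2*(s:ℝ)+3)) = 4*α*((s:ℝ)+1)^2 - α := by ring
    linarith
  have hxy : ((β:ℝ) - (s+1)) / (2*(s+1)+1) + α ≤ ((β:ℝ) - s) / (2*s+1) := by
    rw [div_add' _ _ _ (by positivity), div_le_div_iff₀ (by positivity) hpos1]
    push_cast
    nlinarith
  calc Cfun β (s+1) + α = ⌈((β:ℝ) - (s+1)) / (2*(s+1)+1) + α⌉ := by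
        rw [Cfun, ← Int.ceil_add_intCast]; norm_num
    _ ≤ Cfun β s := Int.ceil_le_ceil hxy

include hα in
lemma Cmin (s : ℕ) : (α:ℤ) * shat α β + Cfun β (shat α β) ≤ α * s + Cfun β s := by
  rcases Nat.le_total (shat α β) s with hs | hs
  · obtain ⟨n, rfl⟩ := Nat.exists_eq_add_of_le hs
    clear hs
    induction n with
    | zero => simp
    | succ n ih =>
      have step := mono_up (β := β) hα (shat α β + n) (Nat.le_add_right _ _)
      have e : ((shat α β + (n+1) : ℕ) : ℤ) = ((shat α β + n : ℕ) : ℤ) + 1 := by push_cast; ring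
      have e2 : ((shat α β + n : ℕ) : ℤ) = (shat α β : ℤ) + n := by push_cast; ring
      rw [show shat α β + (n+1) = (shat α β + n) + 1 from rfl]
      have step2 := mono_up (β := β) hα (shat α β + n) (Nat.le_add_right _ _)
      have hc : Cfun β (shat α β + n) ≤ Cfun β ((shat α β + n) + 1) + α := step2
      have : (α:ℤ) * ((shat α β + n) + 1 : ℕ) = (α:ℤ) * (shat α β + n : ℕ) + α := by
        push_cast; ring
      linarith
  · obtain ⟨n, hn⟩ := Nat.exists_eq_add_of_le hs
    clear hs
    induction n generalizing s with
    | zero =>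
      rw [show s = shat α β from by omega]
    | succ n ih =>
      have hs1 : s + 1 ≤ shat α β := by omega
      have step := mono_down (β := β) hα s hs1
      have ihh := ih (s+1) (by omega)
      have : (α:ℤ) * ((s + 1 : ℕ)) = (α:ℤ) * (s : ℕ) + α := by push_cast; ring
      linarith

include hα in
lemma key (s u : ℕ) (h : β ≤ (2*s+1)*u + s) :
    (α:ℤ) * shat α β + that α β ≤ α * s + u := by
  have hc := c2 (β := β) s u h
  have hm := Cmin (β := β) hα s
  rw [c1 (α := α) (β := β)]
  omega

end Arith
end SpiderAux

namespace SpiderAux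
variable {α β : ℕ}

lemma card_filter_lt (e : ℕ) :
    (Finset.univ.filter fun j : Fin β => j.val < e).card ≤ e := by
  calc (Finset.univ.filter fun j : Fin β => j.val < e).card
      ≤ (Finset.range e).card := by
        exact Finset.card_le_card_of_injOn (fun j => (j : ℕ))
          (by intro j hj
              simp only [Finset.mem_coe, Finset.mem_filter] at hj
              exact Finset.mem_range.mpr hj.2)
          (by intro a _ b _ h
              exact Fin.ext h)
    _ = e := Finset.card_range e

lemma card_near (i : Fin α) (jb : Fin β) (t : ℕ) :
    (Finset.univ.filter fun j : Fin β =>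
      D (some ⟨i, jb⟩) (some ⟨i, j⟩) ≤ t).card ≤ min (2*t+1) ((jb.val + 1) + t) := by
  have hcard : (Finset.univ.filter fun j : Fin β =>
      D (some ⟨i, jb⟩) (some ⟨i, j⟩) ≤ t).card ≤ (Finset.Icc (jb.val - t) (jb.val + t)).card := by
    exact Finset.card_le_card_of_injOn (fun j => (j : ℕ))
      (by intro j hj
          simp only [Finset.mem_coe, Finset.mem_filter] at hj
          have := hj.2
          simp [D, Nat.dist] at this
          dsimp only
          rw [Finset.mem_coe, Finset.mem_Icc]
          omega)
      (by intro a _ b _ h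
          exact Fin.ext h)
  rw [Nat.card_Icc] at hcard
  omega

lemma leg_bound_sum (Bi : Finset (SV α β)) (i : Fin α) (t e : ℕ)
    (hleg : ∀ b ∈ Bi, legO b = some i)
    (h : ∀ j : Fin β, j.val < e ∨ ∃ b ∈ Bi, D b (some ⟨i, j⟩) ≤ t) :
    β ≤ e + ∑ b ∈ Bi, min (2*t+1) (dep b + t) := by
  have hsub : (Finset.univ : Finset (Fin β)) ⊆
      (Finset.univ.filter fun j : Fin β => j.val < e) ∪
      Bi.biUnion (fun b => Finset.univ.filter fun j : Fin β => D b (some ⟨i, j⟩) ≤ t) := by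
    intro j _
    rcases h j with hj | ⟨b, hb, hD⟩
    · exact Finset.mem_union_left _ (Finset.mem_filter.mpr ⟨Finset.mem_univ _, hj⟩)
    · exact Finset.mem_union_right _ (Finset.mem_biUnion.mpr
        ⟨b, hb, Finset.mem_filter.mpr ⟨Finset.mem_univ _, hD⟩⟩)
  have h1 := Finset.card_le_card hsub
  rw [Finset.card_univ, Fintype.card_fin] at h1
  have h2 := Finset.card_union_le
    (Finset.univ.filter fun j : Fin β => j.val < e)
    (Bi.biUnion (fun b => Finset.univ.filter fun j : Fin β => D b (some ⟨i, j⟩) ≤ t))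
  have h3 := Finset.card_biUnion_le (s := Bi)
    (t := fun b => Finset.univ.filter fun j : Fin β => D b (some ⟨i, j⟩) ≤ t)
  have h4 : ∑ b ∈ Bi, (Finset.univ.filter fun j : Fin β => D b (some ⟨i, j⟩) ≤ t).card
      ≤ ∑ b ∈ Bi, min (2*t+1) (dep b + t) := by
    apply Finset.sum_le_sum
    intro b hb
    have hlb := hleg b hb
    match b with
    | none => simp at hlb
    | some ⟨ib, jb⟩ =>
      have : ib = i := by simpa using hlb
      subst this
      simpa using card_near ib jb t
  have h5 := card_filter_lt (β := β) e
  omega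

end SpiderAux

namespace SpiderAux
variable {α β : ℕ}

lemma D_ext {b : SV α β} {i : Fin α} {j : Fin β} (h : legO b ≠ some i) :
    D b (some ⟨i, j⟩) = dep b + (j.val + 1) := by
  unfold D
  rw [legO_some, if_neg h, dep_some]

lemma D_none (b : SV α β) : D b none = dep b := by
  match b with
  | none => simp
  | some p => unfold D; rw [legO_some, legO_none]; simp

set_option maxHeartbeats 1000000 in
lemma counting (hα : 3 ≤ α) (hβ : 1 ≤ β) (B : Finset (SV α β)) (t : ℕ)
    (hcov : ∀ x : SV α β, ∃ b ∈ B, D b x ≤ t) :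
    1 + α * shat α β + that α β ≤ B.card + t := by
  classical
  have keyN : ∀ s u : ℕ, β ≤ (2*s+1)*u + s →
      α * shat α β + that α β ≤ α*s + u := by
    intro s u h
    exact_mod_cast key (β := β) hα s u h
  set bf : Fin α → ℕ := fun i => (B.filter fun x => legO x = some i).card with hbf
  have hfib : B.card = (B.filter fun x => legO x = none).card + ∑ i : Fin α, bf i := by
    have h1 : B.card = ∑ o : Option (Fin α), (B.filter fun x => legO x = o).card :=
      Finset.card_eq_sum_card_fiberwise (fun x _ => Finset.mem_univ (legO x))
    rw [h1, Fintype.sum_option]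
  -- sum bound lemma for a leg
  have hsummin : ∀ i : Fin α,
      ∑ b ∈ (B.filter fun x => legO x = some i), min (2*t+1) (dep b + t) ≤ bf i * (2*t+1) := by
    intro i
    calc ∑ b ∈ (B.filter fun x => legO x = some i), min (2*t+1) (dep b + t)
        ≤ ∑ _b ∈ (B.filter fun x => legO x = some i), (2*t+1) :=
          Finset.sum_le_sum (fun b _ => min_le_left _ _)
      _ = bf i * (2*t+1) := by rw [Finset.sum_const, smul_eq_mul]
  by_cases hc : (none : SV α β) ∈ B
  · -- center blue
    have hleg : ∀ i : Fin α, β ≤ bf i * (2*t+1) + t := by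
      intro i
      have hb := leg_bound_sum (B.filter fun x => legO x = some i) i t t
        (fun b hb => (Finset.mem_filter.mp hb).2) ?_
      · have := hsummin i
        omega
      · intro j
        obtain ⟨b, hb, hD⟩ := hcov (some ⟨i, j⟩)
        by_cases hbleg : legO b = some i
        · exact Or.inr ⟨b, Finset.mem_filter.mpr ⟨hb, hbleg⟩, hD⟩
        · left
          rw [D_ext hbleg] at hD
          omega
    obtain ⟨i0, -, hmin⟩ := Finset.exists_min_image Finset.univ bf
      ⟨⟨0, by omega⟩, Finset.mem_univ _⟩
    have hsumb : α * bf i0 ≤ ∑ i, bf i := by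
      calc α * bf i0 = (Finset.univ : Finset (Fin α)).card • bf i0 := by
            simp [Finset.card_univ, smul_eq_mul]
        _ ≤ ∑ i, bf i := Finset.card_nsmul_le_sum _ _ _ (fun i hi => hmin i hi)
    have hcard : 1 + ∑ i, bf i ≤ B.card := by
      have h1 : 0 < (B.filter fun x => legO x = none).card :=
        Finset.card_pos.mpr ⟨none, Finset.mem_filter.mpr ⟨hc, rfl⟩⟩
      omega
    have hid : bf i0 * (2*t+1) + t = (2*(bf i0)+1)*t + bf i0 := by ring
    have hk := keyN (bf i0) t (by linarith [hleg i0])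
    linarith
  · -- center white
    have hBne : B.Nonempty := by
      obtain ⟨b, hb, -⟩ := hcov none
      exact ⟨b, hb⟩
    obtain ⟨b0, hb0B, hmind⟩ := Finset.exists_min_image B dep hBne
    have hd1 : 1 ≤ dep b0 := by
      rcases Nat.eq_zero_or_pos (dep b0) with h0 | h
      · exact absurd (dep_eq_zero_iff.mp h0 ▸ hb0B) hc
      · exact h
    have hdt : dep b0 ≤ t := by
      obtain ⟨b, hb, hD⟩ := hcov none
      rw [D_none] at hD
      exact le_trans (hmind b hb) hD
    have ht1 : 1 ≤ t := le_trans hd1 hdt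
    obtain ⟨i0, j0, rfl⟩ : ∃ (i : Fin α) (j : Fin β), b0 = some ⟨i, j⟩ := by
      match b0 with
      | none => exact absurd hb0B hc
      | some ⟨i, j⟩ => exact ⟨i, j, rfl⟩
    set d : ℕ := j0.val + 1 with hd
    -- per-leg bound with external prefix ≤ t - d
    have hlegB : ∀ i : Fin α, β ≤ bf i * (2*t+1) + (t - d) := by
      intro i
      have hb := leg_bound_sum (B.filter fun x => legO x = some i) i t (t - d)
        (fun b hb => (Finset.mem_filter.mp hb).2) ?_
      · have := hsummin i
        omega
      · intro j
        obtain ⟨b, hb, hD⟩ := hcov (some ⟨i, j⟩)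
        by_cases hbleg : legO b = some i
        · exact Or.inr ⟨b, Finset.mem_filter.mpr ⟨hb, hbleg⟩, hD⟩
        · left
          rw [D_ext hbleg] at hD
          have hdb : d ≤ dep b := hmind b hb
          omega
    -- refined bound for leg i0
    have hb0f : (some ⟨i0, j0⟩ : SV α β) ∈ B.filter fun x => legO x = some i0 :=
      Finset.mem_filter.mpr ⟨hb0B, rfl⟩
    have hr1 : 1 ≤ bf i0 := Finset.card_pos.mpr ⟨_, hb0f⟩
    have hspecial : β + 1 ≤ bf i0 * (2*t+1) := by
      have hb := leg_bound_sum (B.filter fun x => legO x = some i0) i0 t (t - d)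
        (fun b hb => (Finset.mem_filter.mp hb).2) ?_
      · have hsplit : ∑ b ∈ (B.filter fun x => legO x = some i0), min (2*t+1) (dep b + t)
            = min (2*t+1) (dep (some ⟨i0, j0⟩ : SV α β) + t) +
              ∑ b ∈ ((B.filter fun x => legO x = some i0).erase (some ⟨i0, j0⟩)),
                min (2*t+1) (dep b + t) :=
          (Finset.add_sum_erase _ _ hb0f).symm
        have herase : ∑ b ∈ ((B.filter fun x => legO x = some i0).erase (some ⟨i0, j0⟩)),
              min (2*t+1) (dep b + t) ≤ (bf i0 - 1) * (2*t+1) := by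
          calc ∑ b ∈ ((B.filter fun x => legO x = some i0).erase (some ⟨i0, j0⟩)),
                min (2*t+1) (dep b + t)
              ≤ ∑ _b ∈ ((B.filter fun x => legO x = some i0).erase (some ⟨i0, j0⟩)), (2*t+1) :=
                Finset.sum_le_sum (fun b _ => min_le_left _ _)
            _ = (bf i0 - 1) * (2*t+1) := by
                rw [Finset.sum_const, smul_eq_mul, Finset.card_erase_of_mem hb0f]
        have hminb0 : min (2*t+1) (dep (some ⟨i0, j0⟩ : SV α β) + t) ≤ d + t := by
          simp only [dep_some]
          omega
        have hexp : (bf i0 - 1) * (2*t+1) + (2*t+1) = bf i0 * (2*t+1) := by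
          have h1 : bf i0 - 1 + 1 = bf i0 := by omega
          calc (bf i0 - 1) * (2*t+1) + (2*t+1) = (bf i0 - 1 + 1) * (2*t+1) := by ring
            _ = bf i0 * (2*t+1) := by rw [h1]
        omega
      · intro j
        obtain ⟨b, hb, hD⟩ := hcov (some ⟨i0, j⟩)
        by_cases hbleg : legO b = some i0
        · exact Or.inr ⟨b, Finset.mem_filter.mpr ⟨hb, hbleg⟩, hD⟩
        · left
          rw [D_ext hbleg] at hD
          have hdb : d ≤ dep b := hmind b hb
          omega
    -- minimum over other legs
    have hSne : ((Finset.univ : Finset (Fin α)).erase i0).Nonempty := by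
      rw [← Finset.card_pos, Finset.card_erase_of_mem (Finset.mem_univ i0), Finset.card_univ,
        Fintype.card_fin]
      omega
    obtain ⟨i1, hi1, hq⟩ := Finset.exists_min_image _ bf hSne
    set q : ℕ := bf i1 with hqdef
    set r : ℕ := bf i0 with hrdef
    have hsum2 : r + (α - 1) * q ≤ B.card := by
      have h1 : ∑ i, bf i = bf i0 + ∑ i ∈ (Finset.univ : Finset (Fin α)).erase i0, bf i :=
        (Finset.add_sum_erase _ _ (Finset.mem_univ i0)).symm
      have h2 : (α - 1) * q ≤ ∑ i ∈ (Finset.univ : Finset (Fin α)).erase i0, bf i := by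
        calc (α - 1) * q = ((Finset.univ : Finset (Fin α)).erase i0).card • q := by
              rw [Finset.card_erase_of_mem (Finset.mem_univ i0), Finset.card_univ,
                Fintype.card_fin, smul_eq_mul]
          _ ≤ _ := Finset.card_nsmul_le_sum _ _ _ (fun i hi => hq i hi)
      omega
    have hqB : β ≤ q*(2*t+1) + (t - d) := hlegB i1
    have htd : t - d ≤ t - 1 := by omega
    rcases le_or_gt (q+1) r with hrq | hrq
    · -- r ≥ q + 1
      have hαid : (α - 1) * q + q = α * q := by
        cases α with
        | zero => omega
        | succ a => simp [Nat.succ_sub_one]; ring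
      have hcard2 : 1 + α*q ≤ B.card := by omega
      have hid : q*(2*t+1) + t = (2*q+1)*t + q := by ring
      have hk := keyN q t (by linarith [Nat.sub_le t d])
      linarith
    · -- r ≤ q
      have hrle : r ≤ q := by omega
      have hαid : (α - 1) * r + r = α * r := by
        cases α with
        | zero => omega
        | succ a => simp [Nat.succ_sub_one]; ring
      have hmono : (α - 1) * r ≤ (α - 1) * q := Nat.mul_le_mul_left _ hrle
      have hcard3 : α * r ≤ B.card := by omega
      rcases le_or_gt (2*r) t with h2r | h2r
      · -- t ≥ 2r : use key (r, t-1)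
        have hneed : β ≤ (2*r+1)*(t-1) + r := by
          zify [ht1, hr1]
          zify [ht1, hr1] at hspecial
          nlinarith
        have hk := keyN r (t-1) hneed
        have : α * shat α β + that α β ≤ α * r + (t - 1) := hk
        omega
      · -- t < 2r : use key (r-1, t+α-1)
        have hneed : β ≤ (2*(r-1)+1)*(t+α-1) + (r-1) := by
          zify [ht1, hr1, show 1 ≤ t + α by omega]
          zify [ht1, hr1] at hspecial
          have hh : (t:ℤ) ≤ (2*(r:ℤ)-1)*((α:ℤ)-1) := by
            have h1 : (1:ℤ) ≤ (α:ℤ) - 1 := by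
              have : (3:ℤ) ≤ (α:ℤ) := by exact_mod_cast hα
              omega
            have h2 : (0:ℤ) ≤ 2*(r:ℤ)-1 := by
              have : (1:ℤ) ≤ (r:ℤ) := by exact_mod_cast hr1
              omega
            have h3 : (t:ℤ) ≤ 2*(r:ℤ)-1 := by
              have : (t:ℤ) < 2*(r:ℤ) := by exact_mod_cast h2r
              omega
            nlinarith
          nlinarith
        have hk := keyN (r-1) (t+α-1) hneed
        have hαr : α * (r-1) + α = α * r := by
          have h0 : r - 1 + 1 = r := by omega
          calc α*(r-1) + α = α*((r-1)+1) := by ring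
            _ = α*r := by rw [h0]
        have he : t + α - 1 + 1 = t + α := by omega
        linarith

end SpiderAux

namespace SpiderAux
variable {α β : ℕ}

lemma upper (hα : 3 ≤ α) (hβ : 1 ≤ β) :
    ∃ Bs : Finset (SV α β), Bs.card ≤ 1 + α * shat α β ∧
      ∀ x, ∃ b ∈ Bs, D b x ≤ that α β := by
  classical
  set T := that α β with hT
  set s := shat α β with hs
  set f : Fin α × ℕ → SV α β :=
    fun p => some ⟨p.1, ⟨β - 1 - (T + p.2*(2*T+1)), by omega⟩⟩ with hf
  set I : Finset (SV α β) := ((Finset.univ : Finset (Fin α)) ×ˢ Finset.range s).image f with hI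
  refine ⟨insert none I, ?_, ?_⟩
  · have h1 : (insert none I).card ≤ I.card + 1 := Finset.card_insert_le _ _
    have h2 : I.card ≤ ((Finset.univ : Finset (Fin α)) ×ˢ Finset.range s).card :=
      Finset.card_image_le
    have h3 : ((Finset.univ : Finset (Fin α)) ×ˢ Finset.range s).card = α * s := by
      rw [Finset.card_product, Finset.card_univ, Fintype.card_fin, Finset.card_range]
    omega
  · intro x
    match x with
    | none => exact ⟨none, Finset.mem_insert_self _ _, by simp⟩
    | some ⟨i, j⟩ =>
      by_cases hj : j.val + 1 ≤ T
      · refine ⟨none, Finset.mem_insert_self _ _, ?_⟩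
        rw [D_ext (by simp)]
        simpa using hj
      · have hf3 : β ≤ (2*s+1)*T + s := F3
        have hs1 : 1 ≤ s := by
          by_contra h
          have h0 : s = 0 := by omega
          rw [h0] at hf3
          simp at hf3
          have := j.isLt
          omega
        obtain ⟨k, rem, hdm, hremlt, hkdef⟩ :
            ∃ k rem, k*(2*T+1) + rem = β - 1 - j.val ∧ rem < 2*T + 1 ∧
              k = (β - 1 - j.val) / (2*T+1) :=
          ⟨_, _, by rw [mul_comm]; exact Nat.div_add_mod _ _, Nat.mod_lt _ (by omega), rfl⟩
        have hTj : T ≤ j.val := by omega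
        have hjβ : j.val < β := j.isLt
        have hk : k < s := by
          rw [hkdef, Nat.div_lt_iff_lt_mul (by omega : 0 < 2*T+1)]
          have hident : (2*s+1)*T + s = s*(2*T+1) + T := by ring
          have hsub : β - 1 - j.val + j.val + 1 = β := by omega
          linarith
        have hnt : T + k*(2*T+1) + 1 ≤ β := by
          have h1 : k*(2*T+1) ≤ (s - 1)*(2*T+1) := Nat.mul_le_mul_right _ (by omega)
          have h2 : (s-1)*(2*T+1) + (2*T+1) = s*(2*T+1) := by
            have h0 : s - 1 + 1 = s := by omega
            calc (s-1)*(2*T+1) + (2*T+1) = ((s-1)+1)*(2*T+1) := by ring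
              _ = s*(2*T+1) := by rw [h0]
          have hf7 : (2*T+1)*s ≤ β + T := F7 hα hβ
          have hcomm : (2*T+1)*s = s*(2*T+1) := by ring
          linarith
        refine ⟨f (i, k), ?_, ?_⟩
        · apply Finset.mem_insert_of_mem
          rw [hI]
          apply Finset.mem_image.mpr
          exact ⟨(i, k), Finset.mem_product.mpr ⟨Finset.mem_univ _, Finset.mem_range.mpr hk⟩, rfl⟩
        · have hDval : D (f (i, k)) (some ⟨i, j⟩)
              = Nat.dist (β - 1 - (T + k*(2*T+1)) + 1) (j.val + 1) := by
            rw [hf]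
            simp [D]
          rw [hDval, Nat.dist]
          generalize hKK : k*(2*T+1) = K at hdm hnt ⊢
          omega

lemma main_thm (hα : 3 ≤ α) (hβ : 1 ≤ β) :
    psdTh (balancedSpider α β) = 1 + α * shat α β + that α β := by
  classical
  obtain ⟨Bs, hcard, hcov⟩ := upper hα hβ
  have hmem : (psdStep (balancedSpider α β))^[that α β] (↑Bs : Set (SV α β)) = Set.univ := by
    rw [iterate_eq]
    ext x
    simp only [Set.mem_univ, iff_true, Set.mem_setOf_eq]
    obtain ⟨b, hb, hD⟩ := hcov x
    exact ⟨b, Finset.mem_coe.mpr hb, hD⟩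
  have hforce : IsPSDForcing (balancedSpider α β) (↑Bs : Set (SV α β)) := ⟨_, hmem⟩
  have hpt : psdPt (balancedSpider α β) (↑Bs : Set (SV α β)) ≤ that α β := Nat.sInf_le hmem
  have hmemk : Bs.card + psdPt (balancedSpider α β) ↑Bs ∈
      {k | ∃ B : Finset (SV α β), IsPSDForcing (balancedSpider α β) ↑B ∧
        k = B.card + psdPt (balancedSpider α β) ↑B} := ⟨Bs, hforce, rfl⟩
  apply le_antisymm
  · have h1 : psdTh (balancedSpider α β) ≤ Bs.card + psdPt (balancedSpider α β) ↑Bs :=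
      Nat.sInf_le hmemk
    linarith
  · apply le_csInf ⟨_, hmemk⟩
    rintro k ⟨B, hBf, rfl⟩
    have hne : {t | (psdStep (balancedSpider α β))^[t] (↑B : Set (SV α β)) = Set.univ}.Nonempty :=
      hBf
    have hmem2 := Nat.sInf_mem hne
    have hcover : ∀ x, ∃ b ∈ B, D b x ≤ psdPt (balancedSpider α β) (↑B : Set (SV α β)) := by
      intro x
      have hx : x ∈ (psdStep (balancedSpider α β))^[psdPt (balancedSpider α β) ↑B]
          (↑B : Set (SV α β)) := by
        rw [show (psdStep (balancedSpider α β))^[psdPt (balancedSpider α β) ↑B]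
          (↑B : Set (SV α β)) = Set.univ from hmem2]
        trivial
      rw [iterate_eq] at hx
      obtain ⟨b, hb, hD⟩ := hx
      exact ⟨b, Finset.mem_coe.mp hb, hD⟩
    exact counting hα hβ B _ hcover

end SpiderAux


/-- For the balanced spider `T_{α,β}` with `α ≥ 3` and `β ≥ 1`,
`th₊(T_{α,β}) = 1 + α·ŝ + t` where `ŝ = ⌊√((2β + α + 1)/(4α))⌋` and
`t = ⌈(β - ŝ)/(2ŝ + 1)⌉ = ⌈(β + 1/2)/(2ŝ + 1) - 1/2⌉`. -/
theorem stmt8 (α β : ℕ) (hα : 3 ≤ α) (hβ : 1 ≤ β) :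
    ∃ s t : ℤ,
      s = ⌊Real.sqrt ((2 * (β : ℝ) + (α : ℝ) + 1) / (4 * (α : ℝ)))⌋ ∧
      t = ⌈((β : ℝ) - (s : ℝ)) / (2 * (s : ℝ) + 1)⌉ ∧
      t = ⌈((β : ℝ) + 1 / 2) / (2 * (s : ℝ) + 1) - 1 / 2⌉ ∧
      (psdTh (balancedSpider α β) : ℤ) = 1 + (α : ℤ) * s + t := by
  refine ⟨(SpiderAux.shat α β : ℤ), (SpiderAux.that α β : ℤ), ?_, ?_, ?_, ?_⟩
  · have hF1 : 4*α*(SpiderAux.shat α β)^2 ≤ 2*β + α + 1 := SpiderAux.F1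
    have hF2 : 2*β + α + 1 < 4*α*(SpiderAux.shat α β + 1)^2 := SpiderAux.F2 hα
    have h4 : (0:ℝ) < 4*(α:ℝ) := by positivity
    rw [eq_comm, Int.floor_eq_iff]
    constructor
    · rw [show (((SpiderAux.shat α β : ℤ)) : ℝ) = ((SpiderAux.shat α β : ℕ) : ℝ) from by
        push_cast; ring]
      rw [Real.le_sqrt (by positivity), le_div_iff₀ h4]
      have h1 : ((4*α*(SpiderAux.shat α β)^2 : ℕ) : ℝ) ≤ ((2*β + α + 1 : ℕ) : ℝ) :=
        Nat.cast_le.mpr hF1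
      push_cast at h1 ⊢
      · nlinarith [h1]
      · positivity
    · rw [show (((SpiderAux.shat α β : ℤ)) : ℝ) + 1 = ((SpiderAux.shat α β : ℕ) : ℝ) + 1 from by
        push_cast; ring]
      rw [Real.sqrt_lt' (by positivity), div_lt_iff₀ h4]
      have h2 : ((2*β + α + 1 : ℕ) : ℝ) < ((4*α*(SpiderAux.shat α β + 1)^2 : ℕ) : ℝ) :=
        Nat.cast_lt.mpr hF2
      push_cast at h2 ⊢
      nlinarith [h2]
  · rw [show (((SpiderAux.shat α β : ℤ)) : ℝ) = ((SpiderAux.shat α β : ℕ) : ℝ) from by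
      push_cast; ring]
    exact SpiderAux.c1 (α := α) (β := β)
  · have hne : (2*(((SpiderAux.shat α β : ℤ)) : ℝ)+1) ≠ 0 := by positivity
    have harg : ((β : ℝ) + 1 / 2) / (2 * (((SpiderAux.shat α β : ℤ)) : ℝ) + 1) - 1 / 2
        = ((β : ℝ) - (((SpiderAux.shat α β : ℤ)) : ℝ)) / (2 * (((SpiderAux.shat α β : ℤ)) : ℝ) + 1) := by
      field_simp
      ring
    rw [harg]
    rw [show (((SpiderAux.shat α β : ℤ)) : ℝ) = ((SpiderAux.shat α β : ℕ) : ℝ) from by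
      push_cast; ring]
    exact SpiderAux.c1 (α := α) (β := β)
  · rw [SpiderAux.main_thm hα hβ]
    push_cast
    ring
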